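/- The regular dodecahedron is not a rational polytope: where φ = (1+√5)/2, there do not exist a basis (v₁, v₂, v₃) of ℝ³ and nonzero real numbers c₁, …, c₆ such that the six vectors c₁(0,1,φ), c₂(0,1,−φ), c₃(1,φ,0), c₄(1,−φ,0), c₅(φ,0,1), c₆(φ,0,−1) all belong to the lattice ℤv₁ + ℤv₂ + ℤv₃. -/

import Mathlib

/-- The golden ratio `φ = (1+√5)/2`. -/
noncomputable def gold : ℝ := (1 + Real.sqrt 5) / 2

/-- The six directions (up to sign) of the facet normals of the regular dodecahedron. -/
noncomputable def dodecNormals : Fin 6 → (Fin 3 → ℝ) :=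
  ![![0, 1, gold], ![0, 1, -gold], ![1, gold, 0], ![1, -gold, 0],
    ![gold, 0, 1], ![gold, 0, -1]]

private lemma dn0 : dodecNormals 0 = ![0, 1, gold] := rfl
private lemma dn1 : dodecNormals 1 = ![0, 1, -gold] := rfl
private lemma dn2 : dodecNormals 2 = ![1, gold, 0] := rfl
private lemma dn3 : dodecNormals 3 = ![1, -gold, 0] := rfl
private lemma dn4 : dodecNormals 4 = ![gold, 0, 1] := rfl
private lemma dn5 : dodecNormals 5 = ![gold, 0, -1] := rfl

private lemma gold_pos' : 0 < gold := by
  have := Real.sqrt_nonneg 5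
  unfold gold; linarith

private lemma gold_ne' : gold ≠ 0 := ne_of_gt gold_pos'

private lemma gold_irr' : Irrational gold := Real.goldenRatio_irrational

private lemma gold_sq' : gold ^ 2 = gold + 1 := Real.goldenRatio_sq

/-- Cofactor-style elimination: if a pointwise linear relation holds among four rows,
two of which are the last two rows of the determinants, then a corresponding relation
holds among determinants. -/
private lemma key3 (a b cc dd : ℝ) (p q u w : Fin 3 → ℝ)
    (h0 : a * p 0 + b * q 0 + cc * u 0 + dd * w 0 = 0)
    (h1 : a * p 1 + b * q 1 + cc * u 1 + dd * w 1 = 0)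
    (h2 : a * p 2 + b * q 2 + cc * u 2 + dd * w 2 = 0) :
    a * (Matrix.of ![p, u, w]).det + b * (Matrix.of ![q, u, w]).det = 0 := by
  simp only [Matrix.det_fin_three, Matrix.of_apply, Matrix.cons_val', Matrix.cons_val_zero,
    Matrix.cons_val_one, Matrix.head_cons, Matrix.empty_val', Matrix.cons_val_fin_one,
    Matrix.head_fin_const, Matrix.cons_val_two, Matrix.tail_cons]
  linear_combination (u 1 * w 2 - u 2 * w 1) * h0 + (u 2 * w 0 - u 0 * w 2) * h1 +
    (u 0 * w 1 - u 1 * w 0) * h2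

private lemma det_triple' {v₁ v₂ v₃ x y z : Fin 3 → ℝ} (p0 p1 p2 q0 q1 q2 r0 r1 r2 : ℝ)
    (hx : ∀ k, x k = p0 * v₁ k + p1 * v₂ k + p2 * v₃ k)
    (hy : ∀ k, y k = q0 * v₁ k + q1 * v₂ k + q2 * v₃ k)
    (hz : ∀ k, z k = r0 * v₁ k + r1 * v₂ k + r2 * v₃ k) :
    (Matrix.of ![x, y, z]).det
      = (Matrix.of ![![p0, p1, p2], ![q0, q1, q2], ![r0, r1, r2]]).det
          * (Matrix.of ![v₁, v₂, v₃]).det := by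
  rw [← Matrix.det_mul]
  congr 1
  ext i j
  fin_cases i <;>
    simp [Matrix.mul_apply, Fin.sum_univ_three, hx j, hy j, hz j]

private lemma indep_coeffs {v₁ v₂ v₃ : Fin 3 → ℝ} (h : LinearIndependent ℝ ![v₁, v₂, v₃])
    (x y z : ℝ)
    (hx0 : x * v₁ 0 + y * v₂ 0 + z * v₃ 0 = 0)
    (hx1 : x * v₁ 1 + y * v₂ 1 + z * v₃ 1 = 0)
    (hx2 : x * v₁ 2 + y * v₂ 2 + z * v₃ 2 = 0) :
    x = 0 ∧ y = 0 ∧ z = 0 := by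
  have H := Fintype.linearIndependent_iff.mp h ![x, y, z] (by
    rw [Fin.sum_univ_three]
    funext k
    fin_cases k
    · simpa using hx0
    · simpa using hx1
    · simpa using hx2)
  exact ⟨by simpa using H 0, by simpa using H 1, by simpa using H 2⟩

private lemma int_det (x0 x1 x2 y0 y1 y2 z0 z1 z2 : ℤ) :
    ∃ n : ℤ, (n : ℝ)
      = (Matrix.of ![![(x0 : ℝ), x1, x2], ![(y0 : ℝ), y1, y2], ![(z0 : ℝ), z1, z2]]).det := by
  refine ⟨(Matrix.of ![![x0, x1, x2], ![y0, y1, y2], ![z0, z1, z2]]).det, ?_⟩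
  simp [Matrix.det_fin_three]

/-- The regular dodecahedron is not rational: there is no basis `(v₁, v₂, v₃)` of `ℝ³`
and nonzero reals `c₁, …, c₆` with `cᵢ·nᵢ ∈ ℤv₁ + ℤv₂ + ℤv₃` for each of the six
normal directions `nᵢ`. -/
theorem dodecahedron_not_rational :
    ¬ ∃ (v₁ v₂ v₃ : Fin 3 → ℝ) (c : Fin 6 → ℝ),
        LinearIndependent ℝ ![v₁, v₂, v₃] ∧
        ∀ i : Fin 6, c i ≠ 0 ∧
          ∃ a b d : ℤ,
            c i • dodecNormals i = (a : ℝ) • v₁ + (b : ℝ) • v₂ + (d : ℝ) • v₃ := by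
  rintro ⟨v₁, v₂, v₃, c, hind, hc⟩
  obtain ⟨hc0, a0, b0, d0, h0⟩ := hc 0
  obtain ⟨hc1, a1, b1, d1, h1⟩ := hc 1
  obtain ⟨hc2, a2, b2, d2, h2⟩ := hc 2
  obtain ⟨hc3, a3, b3, d3, h3⟩ := hc 3
  obtain ⟨hc4, a4, b4, d4, h4⟩ := hc 4
  obtain ⟨hc5, a5, b5, d5, h5⟩ := hc 5
  set t0 : ℝ := (c 0)⁻¹ with ht0def
  set t1 : ℝ := (c 1)⁻¹ with ht1def
  set t2 : ℝ := (c 2)⁻¹ with ht2def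
  set t3 : ℝ := (c 3)⁻¹ with ht3def
  set t4 : ℝ := (c 4)⁻¹ with ht4def
  set t5 : ℝ := (c 5)⁻¹ with ht5def
  have ht0 : c 0 * t0 = 1 := by rw [ht0def]; exact mul_inv_cancel₀ hc0
  have ht1 : c 1 * t1 = 1 := by rw [ht1def]; exact mul_inv_cancel₀ hc1
  have ht2 : c 2 * t2 = 1 := by rw [ht2def]; exact mul_inv_cancel₀ hc2
  have ht3 : c 3 * t3 = 1 := by rw [ht3def]; exact mul_inv_cancel₀ hc3
  have ht4 : c 4 * t4 = 1 := by rw [ht4def]; exact mul_inv_cancel₀ hc4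
  have ht5 : c 5 * t5 = 1 := by rw [ht5def]; exact mul_inv_cancel₀ hc5
  have t5ne : t5 ≠ 0 := by rw [ht5def]; exact inv_ne_zero hc5
  -- the 18 coordinate equations
  have E00 : (a0 : ℝ) * v₁ 0 + (b0 : ℝ) * v₂ 0 + (d0 : ℝ) * v₃ 0 = c 0 * 0 := by
    simpa [dn0] using (congrFun h0 0).symm
  have E01 : (a0 : ℝ) * v₁ 1 + (b0 : ℝ) * v₂ 1 + (d0 : ℝ) * v₃ 1 = c 0 * 1 := by
    simpa [dn0] using (congrFun h0 1).symm
  have E02 : (a0 : ℝ) * v₁ 2 + (b0 : ℝ) * v₂ 2 + (d0 : ℝ) * v₃ 2 = c 0 * gold := by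
    simpa [dn0] using (congrFun h0 2).symm
  have E10 : (a1 : ℝ) * v₁ 0 + (b1 : ℝ) * v₂ 0 + (d1 : ℝ) * v₃ 0 = c 1 * 0 := by
    simpa [dn1] using (congrFun h1 0).symm
  have E11 : (a1 : ℝ) * v₁ 1 + (b1 : ℝ) * v₂ 1 + (d1 : ℝ) * v₃ 1 = c 1 * 1 := by
    simpa [dn1] using (congrFun h1 1).symm
  have E12 : (a1 : ℝ) * v₁ 2 + (b1 : ℝ) * v₂ 2 + (d1 : ℝ) * v₃ 2 = c 1 * (-gold) := by
    simpa [dn1] using (congrFun h1 2).symm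
  have E20 : (a2 : ℝ) * v₁ 0 + (b2 : ℝ) * v₂ 0 + (d2 : ℝ) * v₃ 0 = c 2 * 1 := by
    simpa [dn2] using (congrFun h2 0).symm
  have E21 : (a2 : ℝ) * v₁ 1 + (b2 : ℝ) * v₂ 1 + (d2 : ℝ) * v₃ 1 = c 2 * gold := by
    simpa [dn2] using (congrFun h2 1).symm
  have E22 : (a2 : ℝ) * v₁ 2 + (b2 : ℝ) * v₂ 2 + (d2 : ℝ) * v₃ 2 = c 2 * 0 := by
    simpa [dn2] using (congrFun h2 2).symm
  have E30 : (a3 : ℝ) * v₁ 0 + (b3 : ℝ) * v₂ 0 + (d3 : ℝ) * v₃ 0 = c 3 * 1 := by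
    simpa [dn3] using (congrFun h3 0).symm
  have E31 : (a3 : ℝ) * v₁ 1 + (b3 : ℝ) * v₂ 1 + (d3 : ℝ) * v₃ 1 = c 3 * (-gold) := by
    simpa [dn3] using (congrFun h3 1).symm
  have E32 : (a3 : ℝ) * v₁ 2 + (b3 : ℝ) * v₂ 2 + (d3 : ℝ) * v₃ 2 = c 3 * 0 := by
    simpa [dn3] using (congrFun h3 2).symm
  have E40 : (a4 : ℝ) * v₁ 0 + (b4 : ℝ) * v₂ 0 + (d4 : ℝ) * v₃ 0 = c 4 * gold := by
    simpa [dn4] using (congrFun h4 0).symm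
  have E41 : (a4 : ℝ) * v₁ 1 + (b4 : ℝ) * v₂ 1 + (d4 : ℝ) * v₃ 1 = c 4 * 0 := by
    simpa [dn4] using (congrFun h4 1).symm
  have E42 : (a4 : ℝ) * v₁ 2 + (b4 : ℝ) * v₂ 2 + (d4 : ℝ) * v₃ 2 = c 4 * 1 := by
    simpa [dn4] using (congrFun h4 2).symm
  have E50 : (a5 : ℝ) * v₁ 0 + (b5 : ℝ) * v₂ 0 + (d5 : ℝ) * v₃ 0 = c 5 * gold := by
    simpa [dn5] using (congrFun h5 0).symm
  have E51 : (a5 : ℝ) * v₁ 1 + (b5 : ℝ) * v₂ 1 + (d5 : ℝ) * v₃ 1 = c 5 * 0 := by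
    simpa [dn5] using (congrFun h5 1).symm
  have E52 : (a5 : ℝ) * v₁ 2 + (b5 : ℝ) * v₂ 2 + (d5 : ℝ) * v₃ 2 = c 5 * (-1) := by
    simpa [dn5] using (congrFun h5 2).symm
  -- relation R1 : n₀ - n₁ - φ n₄ + φ n₅ = 0, coefficientwise
  obtain ⟨rA0, rA1, rA2⟩ := indep_coeffs hind
    (t0 * ↑a0 - t1 * ↑a1 - gold * (t4 * ↑a4) + gold * (t5 * ↑a5))
    (t0 * ↑b0 - t1 * ↑b1 - gold * (t4 * ↑b4) + gold * (t5 * ↑b5))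
    (t0 * ↑d0 - t1 * ↑d1 - gold * (t4 * ↑d4) + gold * (t5 * ↑d5))
    (by linear_combination t0 * E00 - t1 * E10 - (gold * t4) * E40 + (gold * t5) * E50
          - gold ^ 2 * ht4 + gold ^ 2 * ht5)
    (by linear_combination t0 * E01 - t1 * E11 - (gold * t4) * E41 + (gold * t5) * E51
          + ht0 - ht1)
    (by linear_combination t0 * E02 - t1 * E12 - (gold * t4) * E42 + (gold * t5) * E52
          + gold * ht0 + gold * ht1 - gold * ht4 - gold * ht5)
  -- relation R2 : n₂ - n₃ - φ n₀ - φ n₁ = 0, coefficientwise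
  obtain ⟨rB0, rB1, rB2⟩ := indep_coeffs hind
    (t2 * ↑a2 - t3 * ↑a3 - gold * (t0 * ↑a0) - gold * (t1 * ↑a1))
    (t2 * ↑b2 - t3 * ↑b3 - gold * (t0 * ↑b0) - gold * (t1 * ↑b1))
    (t2 * ↑d2 - t3 * ↑d3 - gold * (t0 * ↑d0) - gold * (t1 * ↑d1))
    (by linear_combination t2 * E20 - t3 * E30 - (gold * t0) * E00 - (gold * t1) * E10
          + ht2 - ht3)
    (by linear_combination t2 * E21 - t3 * E31 - (gold * t0) * E01 - (gold * t1) * E11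
          + gold * ht2 + gold * ht3 - gold * ht0 - gold * ht1)
    (by linear_combination t2 * E22 - t3 * E32 - (gold * t0) * E02 - (gold * t1) * E12
          - gold ^ 2 * ht0 + gold ^ 2 * ht1)
  -- relation R3 : n₄ + n₅ - φ n₂ - φ n₃ = 0, coefficientwise
  obtain ⟨rC0, rC1, rC2⟩ := indep_coeffs hind
    (t4 * ↑a4 + t5 * ↑a5 - gold * (t2 * ↑a2) - gold * (t3 * ↑a3))
    (t4 * ↑b4 + t5 * ↑b5 - gold * (t2 * ↑b2) - gold * (t3 * ↑b3))
    (t4 * ↑d4 + t5 * ↑d5 - gold * (t2 * ↑d2) - gold * (t3 * ↑d3))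
    (by linear_combination t4 * E40 + t5 * E50 - (gold * t2) * E20 - (gold * t3) * E30
          + gold * ht4 + gold * ht5 - gold * ht2 - gold * ht3)
    (by linear_combination t4 * E41 + t5 * E51 - (gold * t2) * E21 - (gold * t3) * E31
          - gold ^ 2 * ht2 + gold ^ 2 * ht3)
    (by linear_combination t4 * E42 + t5 * E52 - (gold * t2) * E22 - (gold * t3) * E32
          + ht4 - ht5)
  -- determinant relations via cofactor elimination
  have eqA := key3 (-(gold * t4)) (gold * t5) t0 (-t1)
    ![(a4 : ℝ), b4, d4] ![(a5 : ℝ), b5, d5] ![(a0 : ℝ), b0, d0] ![(a1 : ℝ), b1, d1]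
    (by simp only [Matrix.cons_val_zero, Matrix.cons_val_one, Matrix.head_cons,
        Matrix.cons_val_two, Matrix.tail_cons]; linear_combination rA0)
    (by simp only [Matrix.cons_val_zero, Matrix.cons_val_one, Matrix.head_cons,
        Matrix.cons_val_two, Matrix.tail_cons]; linear_combination rA1)
    (by simp only [Matrix.cons_val_zero, Matrix.cons_val_one, Matrix.head_cons,
        Matrix.cons_val_two, Matrix.tail_cons]; linear_combination rA2)
  have eqB := key3 (-t1) (-(gold * t4)) t0 (gold * t5)
    ![(a1 : ℝ), b1, d1] ![(a4 : ℝ), b4, d4] ![(a0 : ℝ), b0, d0] ![(a5 : ℝ), b5, d5]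
    (by simp only [Matrix.cons_val_zero, Matrix.cons_val_one, Matrix.head_cons,
        Matrix.cons_val_two, Matrix.tail_cons]; linear_combination rA0)
    (by simp only [Matrix.cons_val_zero, Matrix.cons_val_one, Matrix.head_cons,
        Matrix.cons_val_two, Matrix.tail_cons]; linear_combination rA1)
    (by simp only [Matrix.cons_val_zero, Matrix.cons_val_one, Matrix.head_cons,
        Matrix.cons_val_two, Matrix.tail_cons]; linear_combination rA2)
  have eqC := key3 (-t3) (-(gold * t1)) t2 (-(gold * t0))
    ![(a3 : ℝ), b3, d3] ![(a1 : ℝ), b1, d1] ![(a2 : ℝ), b2, d2] ![(a0 : ℝ), b0, d0]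
    (by simp only [Matrix.cons_val_zero, Matrix.cons_val_one, Matrix.head_cons,
        Matrix.cons_val_two, Matrix.tail_cons]; linear_combination rB0)
    (by simp only [Matrix.cons_val_zero, Matrix.cons_val_one, Matrix.head_cons,
        Matrix.cons_val_two, Matrix.tail_cons]; linear_combination rB1)
    (by simp only [Matrix.cons_val_zero, Matrix.cons_val_one, Matrix.head_cons,
        Matrix.cons_val_two, Matrix.tail_cons]; linear_combination rB2)
  have eqD := key3 t5 (-(gold * t3)) t4 (-(gold * t2))
    ![(a5 : ℝ), b5, d5] ![(a3 : ℝ), b3, d3] ![(a4 : ℝ), b4, d4] ![(a2 : ℝ), b2, d2]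
    (by simp only [Matrix.cons_val_zero, Matrix.cons_val_one, Matrix.head_cons,
        Matrix.cons_val_two, Matrix.tail_cons]; linear_combination rC0)
    (by simp only [Matrix.cons_val_zero, Matrix.cons_val_one, Matrix.head_cons,
        Matrix.cons_val_two, Matrix.tail_cons]; linear_combination rC1)
    (by simp only [Matrix.cons_val_zero, Matrix.cons_val_one, Matrix.head_cons,
        Matrix.cons_val_two, Matrix.tail_cons]; linear_combination rC2)
  -- nondegeneracy of the lattice basis
  have hM : (Matrix.of ![v₁, v₂, v₃]).det ≠ 0 := by
    have hu : IsUnit (Matrix.of ![v₁, v₂, v₃]) :=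
      Matrix.linearIndependent_rows_iff_isUnit.mp hind
    exact ((Matrix.isUnit_iff_isUnit_det _).mp hu).ne_zero
  -- pointwise expansions
  have hx0 : ∀ k, (c 0 • dodecNormals 0) k
      = (a0 : ℝ) * v₁ k + (b0 : ℝ) * v₂ k + (d0 : ℝ) * v₃ k :=
    fun k => by simpa using congrFun h0 k
  have hx1 : ∀ k, (c 1 • dodecNormals 1) k
      = (a1 : ℝ) * v₁ k + (b1 : ℝ) * v₂ k + (d1 : ℝ) * v₃ k :=
    fun k => by simpa using congrFun h1 k
  have hx2 : ∀ k, (c 2 • dodecNormals 2) k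
      = (a2 : ℝ) * v₁ k + (b2 : ℝ) * v₂ k + (d2 : ℝ) * v₃ k :=
    fun k => by simpa using congrFun h2 k
  have hx3 : ∀ k, (c 3 • dodecNormals 3) k
      = (a3 : ℝ) * v₁ k + (b3 : ℝ) * v₂ k + (d3 : ℝ) * v₃ k :=
    fun k => by simpa using congrFun h3 k
  have hx4 : ∀ k, (c 4 • dodecNormals 4) k
      = (a4 : ℝ) * v₁ k + (b4 : ℝ) * v₂ k + (d4 : ℝ) * v₃ k :=
    fun k => by simpa using congrFun h4 k
  have hx5 : ∀ k, (c 5 • dodecNormals 5) k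
      = (a5 : ℝ) * v₁ k + (b5 : ℝ) * v₂ k + (d5 : ℝ) * v₃ k :=
    fun k => by simpa using congrFun h5 k
  -- the four "denominator" determinants are nonzero
  have dA2 := det_triple' (a5 : ℝ) b5 d5 (a0 : ℝ) b0 d0 (a1 : ℝ) b1 d1 hx5 hx0 hx1
  have dA2v : (Matrix.of ![c 5 • dodecNormals 5, c 0 • dodecNormals 0,
      c 1 • dodecNormals 1]).det = -(2 * (c 0 * c 1 * c 5) * gold ^ 2) := by
    rw [Matrix.det_fin_three]
    simp [dn5, dn0, dn1, Matrix.vecHead, Matrix.vecTail]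
    ring
  have hDA2 : (Matrix.of ![![(a5 : ℝ), b5, d5], ![(a0 : ℝ), b0, d0],
      ![(a1 : ℝ), b1, d1]]).det ≠ 0 := by
    intro hz
    have hne : -(2 * (c 0 * c 1 * c 5) * gold ^ 2) ≠ 0 :=
      neg_ne_zero.mpr (mul_ne_zero (mul_ne_zero two_ne_zero
        (mul_ne_zero (mul_ne_zero hc0 hc1) hc5)) (pow_ne_zero 2 gold_ne'))
    exact hne (by rw [← dA2v, dA2, hz, zero_mul])
  have dB2 := det_triple' (a4 : ℝ) b4 d4 (a0 : ℝ) b0 d0 (a5 : ℝ) b5 d5 hx4 hx0 hx5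
  have dB2v : (Matrix.of ![c 4 • dodecNormals 4, c 0 • dodecNormals 0,
      c 5 • dodecNormals 5]).det = -(2 * (c 0 * c 4 * c 5) * gold) := by
    rw [Matrix.det_fin_three]
    simp [dn4, dn0, dn5, Matrix.vecHead, Matrix.vecTail]
    ring
  have hDB2 : (Matrix.of ![![(a4 : ℝ), b4, d4], ![(a0 : ℝ), b0, d0],
      ![(a5 : ℝ), b5, d5]]).det ≠ 0 := by
    intro hz
    have hne : -(2 * (c 0 * c 4 * c 5) * gold) ≠ 0 :=
      neg_ne_zero.mpr (mul_ne_zero (mul_ne_zero two_ne_zero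
        (mul_ne_zero (mul_ne_zero hc0 hc4) hc5)) gold_ne')
    exact hne (by rw [← dB2v, dB2, hz, zero_mul])
  have dC2 := det_triple' (a1 : ℝ) b1 d1 (a2 : ℝ) b2 d2 (a0 : ℝ) b0 d0 hx1 hx2 hx0
  have dC2v : (Matrix.of ![c 1 • dodecNormals 1, c 2 • dodecNormals 2,
      c 0 • dodecNormals 0]).det = -(2 * (c 0 * c 1 * c 2) * gold) := by
    rw [Matrix.det_fin_three]
    simp [dn1, dn2, dn0, Matrix.vecHead, Matrix.vecTail]
    ring
  have hDC2 : (Matrix.of ![![(a1 : ℝ), b1, d1], ![(a2 : ℝ), b2, d2],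
      ![(a0 : ℝ), b0, d0]]).det ≠ 0 := by
    intro hz
    have hne : -(2 * (c 0 * c 1 * c 2) * gold) ≠ 0 :=
      neg_ne_zero.mpr (mul_ne_zero (mul_ne_zero two_ne_zero
        (mul_ne_zero (mul_ne_zero hc0 hc1) hc2)) gold_ne')
    exact hne (by rw [← dC2v, dC2, hz, zero_mul])
  have dD2 := det_triple' (a3 : ℝ) b3 d3 (a4 : ℝ) b4 d4 (a2 : ℝ) b2 d2 hx3 hx4 hx2
  have dD2v : (Matrix.of ![c 3 • dodecNormals 3, c 4 • dodecNormals 4,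
      c 2 • dodecNormals 2]).det = -(2 * (c 2 * c 3 * c 4) * gold) := by
    rw [Matrix.det_fin_three]
    simp [dn3, dn4, dn2, Matrix.vecHead, Matrix.vecTail]
    ring
  have hDD2 : (Matrix.of ![![(a3 : ℝ), b3, d3], ![(a4 : ℝ), b4, d4],
      ![(a2 : ℝ), b2, d2]]).det ≠ 0 := by
    intro hz
    have hne : -(2 * (c 2 * c 3 * c 4) * gold) ≠ 0 :=
      neg_ne_zero.mpr (mul_ne_zero (mul_ne_zero two_ne_zero
        (mul_ne_zero (mul_ne_zero hc2 hc3) hc4)) gold_ne')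
    exact hne (by rw [← dD2v, dD2, hz, zero_mul])
  -- integer values of the determinants
  obtain ⟨nA1, hnA1⟩ := int_det a4 b4 d4 a0 b0 d0 a1 b1 d1
  obtain ⟨nA2, hnA2⟩ := int_det a5 b5 d5 a0 b0 d0 a1 b1 d1
  obtain ⟨nB1, hnB1⟩ := int_det a1 b1 d1 a0 b0 d0 a5 b5 d5
  obtain ⟨nB2, hnB2⟩ := int_det a4 b4 d4 a0 b0 d0 a5 b5 d5
  obtain ⟨nC1, hnC1⟩ := int_det a3 b3 d3 a2 b2 d2 a0 b0 d0
  obtain ⟨nC2, hnC2⟩ := int_det a1 b1 d1 a2 b2 d2 a0 b0 d0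
  obtain ⟨nD1, hnD1⟩ := int_det a5 b5 d5 a4 b4 d4 a2 b2 d2
  obtain ⟨nD2, hnD2⟩ := int_det a3 b3 d3 a4 b4 d4 a2 b2 d2
  -- abbreviate the eight real determinants
  set DA1 : ℝ := (Matrix.of ![![(a4 : ℝ), b4, d4], ![(a0 : ℝ), b0, d0],
    ![(a1 : ℝ), b1, d1]]).det with hDA1def
  set DA2 : ℝ := (Matrix.of ![![(a5 : ℝ), b5, d5], ![(a0 : ℝ), b0, d0],
    ![(a1 : ℝ), b1, d1]]).det with hDA2def
  set DB1 : ℝ := (Matrix.of ![![(a1 : ℝ), b1, d1], ![(a0 : ℝ), b0, d0],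
    ![(a5 : ℝ), b5, d5]]).det with hDB1def
  set DB2 : ℝ := (Matrix.of ![![(a4 : ℝ), b4, d4], ![(a0 : ℝ), b0, d0],
    ![(a5 : ℝ), b5, d5]]).det with hDB2def
  set DC1 : ℝ := (Matrix.of ![![(a3 : ℝ), b3, d3], ![(a2 : ℝ), b2, d2],
    ![(a0 : ℝ), b0, d0]]).det with hDC1def
  set DC2 : ℝ := (Matrix.of ![![(a1 : ℝ), b1, d1], ![(a2 : ℝ), b2, d2],
    ![(a0 : ℝ), b0, d0]]).det with hDC2def
  set DD1 : ℝ := (Matrix.of ![![(a5 : ℝ), b5, d5], ![(a4 : ℝ), b4, d4],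
    ![(a2 : ℝ), b2, d2]]).det with hDD1def
  set DD2 : ℝ := (Matrix.of ![![(a3 : ℝ), b3, d3], ![(a4 : ℝ), b4, d4],
    ![(a2 : ℝ), b2, d2]]).det with hDD2def
  -- cancel gold in eqA
  have hA' : t4 * DA1 = t5 * DA2 := by
    apply mul_left_cancel₀ gold_ne'
    linear_combination -eqA
  -- the key rational identity
  have hkey : DA1 * DB1 * DC1 * DD1 = gold ^ 3 * (DA2 * DB2 * DC2 * DD2) := by
    apply mul_left_cancel₀ t5ne
    linear_combination (DA1 * DB1 * DC1) * eqD + (-(gold * (DD2 * (DA1 * DB1)))) * eqC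
      + (gold ^ 2 * (DD2 * (DC2 * DA1))) * eqB + (gold ^ 3 * (DD2 * (DC2 * DB2))) * hA'
  -- pass to integers
  have hNr : ((nA1 * nB1 * nC1 * nD1 : ℤ) : ℝ) = DA1 * DB1 * DC1 * DD1 := by
    push_cast
    rw [hnA1, hnB1, hnC1, hnD1]
  have hDr : ((nA2 * nB2 * nC2 * nD2 : ℤ) : ℝ) = DA2 * DB2 * DC2 * DD2 := by
    push_cast
    rw [hnA2, hnB2, hnC2, hnD2]
  have hDne : ((nA2 * nB2 * nC2 * nD2 : ℤ) : ℝ) ≠ 0 := by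
    rw [hDr]
    exact mul_ne_zero (mul_ne_zero (mul_ne_zero hDA2 hDB2) hDC2) hDD2
  have hg3 : gold ^ 3
      = ((nA1 * nB1 * nC1 * nD1 : ℤ) : ℝ) / ((nA2 * nB2 * nC2 * nD2 : ℤ) : ℝ) := by
    rw [eq_div_iff hDne, hNr, hDr]
    linear_combination -hkey
  -- contradiction with irrationality of gold
  apply gold_irr'
  refine ⟨(((nA1 * nB1 * nC1 * nD1 : ℤ) : ℚ) / ((nA2 * nB2 * nC2 * nD2 : ℤ) : ℚ) - 1) / 2, ?_⟩
  push_cast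
  push_cast at hg3
  rw [← hg3]
  linear_combination ((gold + 1) / 2) * gold_sq'
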